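/- arXiv:1210.4639 — 2 statements merged into one kernel-verified Lean document; each statement's English description precedes it below -/
import Mathlib

section
/- Let r ≥ 0, t, k be integers with 2 ≤ t ≤ r + 1 and k ≥ r, and set Ω = Ω(t,r), a = a(t,r), b = b(t,r). Then, as integers, t·C(k+2−(r+1), 2) − b·C(k+2−Ω, 2) − a·C(k+2−(Ω+1), 2) = C(k+2, 2) − C(r+2, 2) − Σ_{j=1}^{k−r} max(r + j + 1 − j·t, 0). -/
/-- `Ω t r = ⌊t·r/(t-1)⌋ + 1`, the floor taken in `ℚ`. -/
noncomputable def Omega (t r : ℤ) : ℤ := ⌊(t * r : ℚ) / ((t : ℚ) - 1)⌋ + 1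

/-- `a t r = t·(r+1) + (1−t)·Ω(t,r)`. -/
noncomputable def aa (t r : ℤ) : ℤ := t * (r + 1) + (1 - t) * Omega t r

/-- `b t r = t − 1 − a(t,r)`. -/
noncomputable def bb (t r : ℤ) : ℤ := t - 1 - aa t r

/-- `C2 m = C(m, 2)`, with the convention that it is `0` for `m < 2`
(truncation via `Int.toNat`). -/
def C2 (m : ℤ) : ℤ := ((m.toNat).choose 2 : ℤ)

lemma C2_succ (m : ℤ) : C2 (m + 1) = C2 m + max m 0 := by
  unfold C2
  rcases le_or_gt m 0 with h | h
  · have h2 : m.toNat = 0 := by omega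
    have h1 : (m + 1).toNat = 0 ∨ (m + 1).toNat = 1 := by omega
    rw [max_eq_right h]
    rcases h1 with h1 | h1 <;> simp [h1, h2]
  · have h1 : (m + 1).toNat = m.toNat + 1 := by omega
    have h2 : (m.toNat : ℤ) = m := by omega
    rw [h1, max_eq_left h.le, Nat.choose_succ_succ, Nat.choose_one_right]
    push_cast
    omega

lemma C2_eq_zero {m : ℤ} (h : m ≤ 1) : C2 m = 0 := by
  unfold C2
  have : m.toNat = 0 ∨ m.toNat = 1 := by omega
  rcases this with h1 | h1 <;> simp [h1]

lemma Omega_eq (t r : ℤ) (ht : 2 ≤ t) (hr : 0 ≤ r) :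
    Omega t r = r + r / (t - 1) + 1 := by
  have h : ((t - 1).toNat : ℤ) = t - 1 := by omega
  have hd : (((t - 1).toNat : ℕ) : ℚ) = (t : ℚ) - 1 := by
    calc (((t - 1).toNat : ℕ) : ℚ) = (((t - 1).toNat : ℤ) : ℚ) := by push_cast; ring
    _ = ((t - 1 : ℤ) : ℚ) := by rw [h]
    _ = (t : ℚ) - 1 := by push_cast; ring
  unfold Omega
  rw [show ((t : ℚ) * (r : ℚ)) = (((t * r : ℤ)) : ℚ) from by push_cast; ring, ← hd,
    Rat.floor_intCast_div_natCast, h,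
    show t * r = r + (t - 1) * r from by ring,
    Int.add_mul_ediv_left r r (show (t - 1 : ℤ) ≠ 0 by omega)]
  ring

lemma aux (t q s r : ℤ) (ht : 2 ≤ t) (hq : 0 ≤ q) (hs0 : 0 ≤ s) (hs1 : s < t - 1)
    (hrqs : r = (t - 1) * q + s) :
    ∀ n : ℤ, 0 ≤ n →
      t * C2 (n + 1) - (t - 2 - s) * C2 (n + 1 - q) - (s + 1) * C2 (n - q)
      = C2 (r + n + 2) - C2 (r + 2)
        - ∑ j ∈ Finset.Icc (1 : ℤ) n, max (r + j + 1 - j * t) 0 := by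
  have hr0 : 0 ≤ r := by nlinarith
  intro n hn
  refine Int.le_induction (motive := fun n _ =>
    t * C2 (n + 1) - (t - 2 - s) * C2 (n + 1 - q) - (s + 1) * C2 (n - q)
      = C2 (r + n + 2) - C2 (r + 2)
        - ∑ j ∈ Finset.Icc (1 : ℤ) n, max (r + j + 1 - j * t) 0)
    ?_ (fun n hn IH => ?_) n hn
  · beta_reduce
    rw [C2_eq_zero (show (0:ℤ) + 1 ≤ 1 by norm_num),
      C2_eq_zero (show (0:ℤ) + 1 - q ≤ 1 by omega),
      C2_eq_zero (show (0:ℤ) - q ≤ 1 by omega),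
      show r + 0 + 2 = r + 2 from by ring]
    simp
  · beta_reduce at IH ⊢
    have hsplit : Finset.Icc (1:ℤ) (n + 1) = insert (n + 1) (Finset.Icc 1 n) := by
      ext x; simp only [Finset.mem_Icc, Finset.mem_insert]; omega
    rw [show n + 1 + 1 = (n + 1) + 1 from rfl, C2_succ (n + 1),
      show n + 1 + 1 - q = (n + 1 - q) + 1 from by ring, C2_succ (n + 1 - q),
      show n + 1 - q = (n - q) + 1 from by ring, C2_succ (n - q),
      show r + (n + 1) + 2 = (r + n + 2) + 1 from by ring, C2_succ (r + n + 2),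
      hsplit, Finset.sum_insert (by simp)]
    rw [show n + 1 - q = (n - q) + 1 from by ring, C2_succ (n - q)] at IH
    rw [max_eq_left (show (0:ℤ) ≤ n + 1 by omega),
      max_eq_left (show (0:ℤ) ≤ r + n + 2 by omega)]
    rcases lt_trichotomy n q with hc | hc | hc
    · -- n + 1 ≤ q
      have h1 : (n + 1) * (t - 1) ≤ q * (t - 1) :=
        mul_le_mul_of_nonneg_right (by omega) (by omega)
      rw [max_eq_right (show n - q ≤ 0 by omega)] at IH ⊢
      rw [max_eq_right (show n - q + 1 ≤ 0 by omega),
        max_eq_left (show (0:ℤ) ≤ r + (n + 1) + 1 - (n + 1) * t by nlinarith)]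
      linear_combination IH
    · -- n = q
      subst hc
      rw [sub_self, max_self] at IH ⊢
      rw [show (0:ℤ) + 1 = 1 from by norm_num,
        max_eq_left (show (0:ℤ) ≤ (1:ℤ) by norm_num),
        max_eq_right (show r + (n + 1) + 1 - (n + 1) * t ≤ 0 by nlinarith)]
      linear_combination IH - hrqs
    · -- q < n
      have h1 : (q + 2) * (t - 1) ≤ (n + 1) * (t - 1) :=
        mul_le_mul_of_nonneg_right (by omega) (by omega)
      rw [max_eq_left (show (0:ℤ) ≤ n - q by omega)] at IH ⊢
      rw [max_eq_left (show (0:ℤ) ≤ n - q + 1 by omega),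
        max_eq_right (show r + (n + 1) + 1 - (n + 1) * t ≤ 0 by nlinarith)]
      linear_combination IH - hrqs

theorem stmt_5 (r t k : ℤ) (hr : 0 ≤ r) (ht2 : 2 ≤ t) (htr : t ≤ r + 1) (hk : k ≥ r) :
    t * C2 (k + 2 - (r + 1)) - bb t r * C2 (k + 2 - Omega t r)
      - aa t r * C2 (k + 2 - (Omega t r + 1))
    = C2 (k + 2) - C2 (r + 2)
      - ∑ j ∈ Finset.Icc (1 : ℤ) (k - r), max (r + j + 1 - j * t) 0 := by
  set q := r / (t - 1) with hqdef
  set s := r % (t - 1) with hsdef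
  have ht1 : (0:ℤ) < t - 1 := by omega
  have hqs : (t - 1) * q + s = r := Int.mul_ediv_add_emod r (t - 1)
  have hs0 : 0 ≤ s := Int.emod_nonneg r (by omega)
  have hs1 : s < t - 1 := Int.emod_lt_of_pos r ht1
  have hq0 : 0 ≤ q := Int.ediv_nonneg hr (by omega)
  have hOm : Omega t r = r + q + 1 := by rw [Omega_eq t r ht2 hr, ← hqdef]
  have ha : aa t r = s + 1 := by
    unfold aa; rw [hOm]; linear_combination -hqs
  have hb : bb t r = t - 2 - s := by unfold bb; rw [ha]; ring
  have key := aux t q s r ht2 hq0 hs0 hs1 hqs.symm (k - r) (by omega)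
  rw [hOm, ha, hb,
    show k + 2 - (r + 1) = (k - r) + 1 from by ring,
    show k + 2 - (r + q + 1) = (k - r) + 1 - q from by ring,
    show k + 2 - (r + q + 1 + 1) = (k - r) - q from by ring,
    show k + 2 = r + (k - r) + 2 from by ring]
  exact key
end

section
/- Let a be a nonzero real number, let r ≥ 0 and d ≥ r + 1 be integers. For every homogeneous polynomial g ∈ ℝ[x,y,z] of degree d, there exist homogeneous polynomials u', v' of degree d and a homogeneous polynomial w' of degree 2r (each possibly zero) such that (x + a·y)^{r+1}·g = x^{r+1}·u' + y^{r+1}·v' + z^{d−r+1}·w'. -/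
open MvPolynomial

private lemma deg_of (m : Fin 3 →₀ ℕ) {N : ℕ} (h : (Finsupp.weight 1) m = N) :
    m.degree = N := by rw [Finsupp.degree_eq_weight_one]; exact h

private lemma degree_eq_fin3 (m : Fin 3 →₀ ℕ) : m.degree = m 0 + m 1 + m 2 := by
  rw [Finsupp.degree_apply, Finset.sum_subset (Finset.subset_univ m.support)
    (by intro i _ hi; simpa using Finsupp.notMem_support_iff.mp hi)]
  simp [Fin.sum_univ_three]

private lemma extract (p : MvPolynomial (Fin 3) ℝ) {N : ℕ} (hp : p.IsHomogeneous N)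
    (i : Fin 3) (k : ℕ) (h : ∀ m ∈ p.support, k ≤ m i) :
    ∃ q : MvPolynomial (Fin 3) ℝ, q.IsHomogeneous (N - k) ∧ p = X i ^ k * q := by
  refine ⟨∑ m ∈ p.support, monomial (m - Finsupp.single i k) (coeff m p), ?_, ?_⟩
  · apply IsHomogeneous.sum
    intro m hm
    apply isHomogeneous_monomial
    have h1 : (Finsupp.single i k : Fin 3 →₀ ℕ) ≤ m :=
      Finsupp.single_le_iff.mpr (h m hm)
    have h3 : m.degree = N := deg_of m (hp (mem_support_iff.mp hm))
    have h4 : k ≤ m i := h m hm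
    rw [degree_eq_fin3] at h3 ⊢
    have e0 : (m - Finsupp.single i k) 0 = m 0 - Finsupp.single i k 0 :=
      Finsupp.tsub_apply _ _ _
    have e1 : (m - Finsupp.single i k) 1 = m 1 - Finsupp.single i k 1 :=
      Finsupp.tsub_apply _ _ _
    have e2 : (m - Finsupp.single i k) 2 = m 2 - Finsupp.single i k 2 :=
      Finsupp.tsub_apply _ _ _
    fin_cases i <;> simp [Finsupp.single_apply, e0, e1, e2] at * <;> omega
  · conv_lhs => rw [p.as_sum]
    rw [Finset.mul_sum]
    refine Finset.sum_congr rfl fun m hm => ?_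
    rw [X_pow_eq_monomial, monomial_mul, one_mul]
    have he : (Finsupp.single i k) + (m - Finsupp.single i k) = m := by
      rw [add_comm]
      exact tsub_add_cancel_of_le (Finsupp.single_le_iff.mpr (h m hm))
    rw [he]

theorem stmt_15 (a : ℝ) (ha : a ≠ 0) (r d : ℕ) (hd : r + 1 ≤ d)
    (g : MvPolynomial (Fin 3) ℝ) (hg : g.IsHomogeneous d) :
    ∃ u' v' w' : MvPolynomial (Fin 3) ℝ,
      u'.IsHomogeneous d ∧ v'.IsHomogeneous d ∧ w'.IsHomogeneous (2 * r) ∧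
      (X 0 + C a * X 1) ^ (r + 1) * g =
        X 0 ^ (r + 1) * u' + X 1 ^ (r + 1) * v' + X 2 ^ (d - r + 1) * w' := by
  set P : MvPolynomial (Fin 3) ℝ := (X 0 + C a * X 1) ^ (r + 1) * g with hPdef
  have hP : P.IsHomogeneous (d + r + 1) := by
    have h1 : (X 0 + C a * X 1 : MvPolynomial (Fin 3) ℝ).IsHomogeneous 1 :=
      (isHomogeneous_X ℝ 0).add ((isHomogeneous_X ℝ 1).C_mul a)
    have := (h1.pow (r + 1)).mul hg
    rwa [show 1 * (r + 1) + d = d + r + 1 by ring] at this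
  classical
  set qw : (Fin 3 →₀ ℕ) → Prop := fun m => d - r + 1 ≤ m 2 with hqw
  set qu : (Fin 3 →₀ ℕ) → Prop := fun m => r + 1 ≤ m 0 with hqu
  set Sw := P.support.filter qw with hSw
  set Su := (P.support.filter fun m => ¬ qw m).filter qu with hSu
  set Sv := (P.support.filter fun m => ¬ qw m).filter (fun m => ¬ qu m) with hSv
  set Pw : MvPolynomial (Fin 3) ℝ := ∑ m ∈ Sw, monomial m (coeff m P) with hPw
  set Pu : MvPolynomial (Fin 3) ℝ := ∑ m ∈ Su, monomial m (coeff m P) with hPu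
  set Pv : MvPolynomial (Fin 3) ℝ := ∑ m ∈ Sv, monomial m (coeff m P) with hPv
  have hsplit : P = Pw + Pu + Pv := by
    conv_lhs => rw [P.as_sum]
    rw [← Finset.sum_filter_add_sum_filter_not P.support qw,
      ← Finset.sum_filter_add_sum_filter_not (P.support.filter fun m => ¬ qw m) qu]
    ring
  -- support facts
  have hsub : ∀ (S : Finset (Fin 3 →₀ ℕ)),
      (∑ m ∈ S, monomial m (coeff m P)).support ⊆ S := by
    intro S
    refine (support_sum).trans ?_
    intro x hx
    simp only [Finset.mem_biUnion] at hx
    obtain ⟨m, hm, hx⟩ := hx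
    rcases Finset.mem_singleton.mp (support_monomial_subset hx) with rfl
    exact hm
  have hhom : ∀ (S : Finset (Fin 3 →₀ ℕ)), S ⊆ P.support →
      (∑ m ∈ S, monomial m (coeff m P)).IsHomogeneous (d + r + 1) := by
    intro S hS
    apply IsHomogeneous.sum
    intro m hm
    exact isHomogeneous_monomial _ (deg_of m (hP (mem_support_iff.mp (hS hm))))
  have hSwP : Sw ⊆ P.support := Finset.filter_subset _ _
  have hSuP : Su ⊆ P.support :=
    (Finset.filter_subset _ _).trans (Finset.filter_subset _ _)
  have hSvP : Sv ⊆ P.support :=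
    (Finset.filter_subset _ _).trans (Finset.filter_subset _ _)
  obtain ⟨u', hu1, hu2⟩ := extract Pu (hhom Su hSuP) 0 (r + 1)
    (fun m hm => (Finset.mem_filter.mp (hsub Su hm)).2)
  obtain ⟨v', hv1, hv2⟩ := extract Pv (hhom Sv hSvP) 1 (r + 1)
    (by
      intro m hm
      have hm' := hsub Sv hm
      rw [hSv, Finset.mem_filter, Finset.mem_filter] at hm'
      obtain ⟨⟨hmP, h2⟩, h0⟩ := hm'
      have hdeg : m.degree = d + r + 1 := deg_of m (hP (mem_support_iff.mp hmP))
      rw [degree_eq_fin3] at hdeg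
      simp only [hqw, hqu] at h2 h0
      omega)
  obtain ⟨w', hw1, hw2⟩ := extract Pw (hhom Sw hSwP) 2 (d - r + 1)
    (fun m hm => (Finset.mem_filter.mp (hsub Sw hm)).2)
  refine ⟨u', v', w', ?_, ?_, ?_, ?_⟩
  · rwa [show d + r + 1 - (r + 1) = d by omega] at hu1
  · rwa [show d + r + 1 - (r + 1) = d by omega] at hv1
  · rwa [show d + r + 1 - (d - r + 1) = 2 * r by omega] at hw1
  · rw [hsplit, hu2, hv2, hw2]; ring
end
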